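/- arXiv:1812.11528 — 2 statements merged into one kernel-verified Lean document; each statement's English description precedes it below -/
import Mathlib

section
/- For all nonnegative integers m, n, k, l, the Lie bracket of two Eulerian vector fields satisfies [E_{m,n}, E_{k,l}] = 2(m + n − k − l)·E_{m+k, n+l} as a map ℝ⁴ → ℝ⁴. -/
/-- Lie bracket of vector fields on ℝ⁴: [V,W](x) = DV(x)(W(x)) − DW(x)(V(x)). -/
noncomputable def bracket (V W : (Fin 4 → ℝ) → (Fin 4 → ℝ)) : (Fin 4 → ℝ) → (Fin 4 → ℝ) :=
  fun x => fderiv ℝ V x (W x) - fderiv ℝ W x (V x)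

/-- The Eulerian vector field E₀₀(x) = x. -/
def E00 : (Fin 4 → ℝ) → (Fin 4 → ℝ) := fun x => x

/-- The rotational vector fields Θ¹₀₀(x) = (−y₁, x₁, 0, 0) and Θ²₀₀(x) = (0, 0, −y₂, x₂). -/
def Theta0 (i : Fin 2) : (Fin 4 → ℝ) → (Fin 4 → ℝ) :=
  if i = 0 then (fun x => ![-(x 1), x 0, 0, 0]) else (fun x => ![0, 0, -(x 3), x 2])

/-- Z_{m,n}(x) = (x₁² + y₁²)^m (x₂² + y₂²)^n. -/
def Z (m n : ℕ) : (Fin 4 → ℝ) → ℝ :=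
  fun x => ((x 0) ^ 2 + (x 1) ^ 2) ^ m * ((x 2) ^ 2 + (x 3) ^ 2) ^ n

/-- E_{m,n} = Z_{m,n} · E₀₀. -/
def Emn (m n : ℕ) : (Fin 4 → ℝ) → (Fin 4 → ℝ) := fun x => Z m n x • E00 x

/-- Θ^i_{m,n} = Z_{m,n} · Θ^i₀₀. -/
def Thmn (i : Fin 2) (m n : ℕ) : (Fin 4 → ℝ) → (Fin 4 → ℝ) := fun x => Z m n x • Theta0 i x


lemma myPow {f : (Fin 4 → ℝ) → ℝ} {f' : (Fin 4 → ℝ) →L[ℝ] ℝ} {x} (h : HasFDerivAt f f' x)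
    (p : ℕ) : HasFDerivAt (fun y => f y ^ p) (((p : ℝ) * f x ^ (p - 1)) • f') x := by
  induction p with
  | zero => simpa using hasFDerivAt_const (1:ℝ) x
  | succ p ih =>
      have h2 := ih.mul h
      have : (f x ^ p) • f' + f x • (((p : ℝ) * f x ^ (p - 1)) • f')
          = (((p : ℝ) + 1) * f x ^ p) • f' := by
        rw [smul_smul, ← add_smul]
        congr 1
        cases p with
        | zero => simp
        | succ q => push_cast [Nat.succ_sub_one]; ring
      have e : (fun y => f y ^ (p + 1)) = (fun y => f y ^ p * f y) := by funext y; ring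
      rw [e]
      rw [this] at h2
      have e2 : ((↑(p + 1) : ℝ) * f x ^ (p + 1 - 1)) = ((p : ℝ) + 1) * f x ^ p := by simp
      rw [e2]
      exact h2

lemma Z_deriv (m n : ℕ) (x : Fin 4 → ℝ) :
    ∃ L : (Fin 4 → ℝ) →L[ℝ] ℝ, HasFDerivAt (Z m n) L x ∧
      L x = 2 * ((m : ℝ) + n) * Z m n x := by
  have h0 := hasFDerivAt_apply (𝕜 := ℝ) (F' := fun _ : Fin 4 => ℝ) 0 x
  have h1 := hasFDerivAt_apply (𝕜 := ℝ) (F' := fun _ : Fin 4 => ℝ) 1 x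
  have h2 := hasFDerivAt_apply (𝕜 := ℝ) (F' := fun _ : Fin 4 => ℝ) 2 x
  have h3 := hasFDerivAt_apply (𝕜 := ℝ) (F' := fun _ : Fin 4 => ℝ) 3 x
  have hz1 := (myPow h0 2).add (myPow h1 2)
  have hz2 := (myPow h2 2).add (myPow h3 2)
  have hZ := (myPow hz1 m).mul (myPow hz2 n)
  refine ⟨_, hZ, ?_⟩
  simp only [ContinuousLinearMap.add_apply, ContinuousLinearMap.smul_apply,
    ContinuousLinearMap.proj_apply, smul_eq_mul, Z]
  have key : ∀ (a : ℝ) (p : ℕ), (p : ℝ) * a ^ (p - 1) * a = p * a ^ p := by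
    intro a p
    cases p with
    | zero => simp
    | succ q => push_cast [Nat.succ_sub_one, pow_succ]; ring
  have k1 := key ((x 0) ^ 2 + (x 1) ^ 2) m
  have k2 := key ((x 2) ^ 2 + (x 3) ^ 2) n
  norm_num
  linear_combination (2 * ((x 0) ^ 2 + (x 1) ^ 2) ^ m) * k2 + (2 * ((x 2) ^ 2 + (x 3) ^ 2) ^ n) * k1

lemma Z_mul (m n k l : ℕ) (x : Fin 4 → ℝ) : Z m n x * Z k l x = Z (m + k) (n + l) x := by
  simp only [Z, pow_add]; ring

/-- [E_{m,n}, E_{k,l}] = 2(m+n−k−l)·E_{m+k,n+l}. -/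
theorem bracket_Emn_Emn (m n k l : ℕ) :
    bracket (Emn m n) (Emn k l) =
      fun x => (2 * ((m : ℝ) + n - k - l)) • Emn (m + k) (n + l) x := by
  funext x
  obtain ⟨L1, hL1, e1⟩ := Z_deriv m n x
  obtain ⟨L2, hL2, e2⟩ := Z_deriv k l x
  have hE1 : HasFDerivAt (Emn m n)
      (Z m n x • ContinuousLinearMap.id ℝ (Fin 4 → ℝ) + L1.smulRight x) x := by
    simpa [Emn, E00] using hL1.smul (hasFDerivAt_id x)
  have hE2 : HasFDerivAt (Emn k l)
      (Z k l x • ContinuousLinearMap.id ℝ (Fin 4 → ℝ) + L2.smulRight x) x := by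
    simpa [Emn, E00] using hL2.smul (hasFDerivAt_id x)
  show fderiv ℝ (Emn m n) x (Emn k l x) - fderiv ℝ (Emn k l) x (Emn m n x) = _
  rw [hE1.fderiv, hE2.fderiv]
  simp only [ContinuousLinearMap.add_apply, ContinuousLinearMap.smul_apply,
    ContinuousLinearMap.coe_id', id_eq, ContinuousLinearMap.smulRight_apply,
    Emn, E00, map_smul, e1, e2, smul_eq_mul]
  rw [← Z_mul m n k l x]
  match_scalars
  ring
end

section
/- The real span 𝓛 of the set of vector fields {E_{m,n} : m, n ≥ 0} ∪ {Θ^i_{m,n} : i ∈ {1,2}, m, n ≥ 0}, taken as a submodule of the maps ℝ⁴ → ℝ⁴, is closed under the Lie bracket: for all V, W in this span, [V, W] also lies in the span. (In other words, 𝓛 is a Lie algebra.) -/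
/-- The generators of 𝓛: all E_{m,n} and all Θ^i_{m,n}. -/
def lieGens : Set ((Fin 4 → ℝ) → (Fin 4 → ℝ)) :=
  {V | ∃ m n : ℕ, V = Emn m n} ∪ {V | ∃ (i : Fin 2) (m n : ℕ), V = Thmn i m n}

abbrev E4 := Fin 4 → ℝ
noncomputable def pr (i : Fin 4) : E4 →L[ℝ] ℝ := ContinuousLinearMap.proj i

lemma pow_deriv_aux (a : ℝ) (n : ℕ) : (n : ℝ) * a ^ (n - 1) * a = n * a ^ n := by
  cases n with
  | zero => simp
  | succ k => simp [pow_succ]; ring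

lemma hasFDerivAt_pow'' {f : E4 → ℝ} {f' : E4 →L[ℝ] ℝ} {x : E4}
    (hf : HasFDerivAt f f' x) (n : ℕ) :
    HasFDerivAt (fun y => f y ^ n) (((n : ℝ) * f x ^ (n - 1)) • f') x := by
  induction n with
  | zero => simpa using hasFDerivAt_const (1 : ℝ) x
  | succ k ih =>
      have h := ih.mul hf
      have : (f x ^ k) • f' + f x • (((k : ℝ) * f x ^ (k - 1)) • f')
          = (((k : ℝ) + 1) * f x ^ k) • f' := by
        rw [smul_smul, ← add_smul]
        congr 1
        have := pow_deriv_aux (f x) k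
        ring_nf
        ring_nf at this
        linarith
      simp only [pow_succ]
      refine h.congr_fderiv ?_
      rw [this]
      simp

noncomputable def D1 (x : E4) : E4 →L[ℝ] ℝ := (2 * x 0) • pr 0 + (2 * x 1) • pr 1
noncomputable def D2 (x : E4) : E4 →L[ℝ] ℝ := (2 * x 2) • pr 2 + (2 * x 3) • pr 3

lemma hasFDerivAt_proj (i : Fin 4) (x : E4) : HasFDerivAt (fun y : E4 => y i) (pr i) x :=
  (pr i).hasFDerivAt

lemma hasFDerivAt_r1 (x : E4) :
    HasFDerivAt (fun y : E4 => (y 0) ^ 2 + (y 1) ^ 2) (D1 x) x := by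
  have h0 := (hasFDerivAt_pow'' (hasFDerivAt_proj 0 x) 2)
  have h1 := (hasFDerivAt_pow'' (hasFDerivAt_proj 1 x) 2)
  have := h0.add h1
  refine this.congr_fderiv ?_
  unfold D1
  ext v
  simp
  all_goals ring

lemma hasFDerivAt_r2 (x : E4) :
    HasFDerivAt (fun y : E4 => (y 2) ^ 2 + (y 3) ^ 2) (D2 x) x := by
  have h0 := (hasFDerivAt_pow'' (hasFDerivAt_proj 2 x) 2)
  have h1 := (hasFDerivAt_pow'' (hasFDerivAt_proj 3 x) 2)
  have := h0.add h1
  refine this.congr_fderiv ?_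
  unfold D2
  ext v
  simp
  all_goals ring

noncomputable def dZ (m n : ℕ) (x : E4) : E4 →L[ℝ] ℝ :=
  (((x 2) ^ 2 + (x 3) ^ 2) ^ n * ((m : ℝ) * ((x 0) ^ 2 + (x 1) ^ 2) ^ (m - 1))) • D1 x
  + (((x 0) ^ 2 + (x 1) ^ 2) ^ m * ((n : ℝ) * ((x 2) ^ 2 + (x 3) ^ 2) ^ (n - 1))) • D2 x

lemma hasFDerivAt_Z (m n : ℕ) (x : E4) : HasFDerivAt (Z m n) (dZ m n x) x := by
  have h1 := hasFDerivAt_pow'' (hasFDerivAt_r1 x) m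
  have h2 := hasFDerivAt_pow'' (hasFDerivAt_r2 x) n
  have := h1.mul h2
  refine this.congr_fderiv ?_
  unfold dZ
  ext v
  simp
  all_goals ring

lemma dZ_apply (m n : ℕ) (x v : E4) :
    dZ m n x v =
      ((x 2) ^ 2 + (x 3) ^ 2) ^ n * ((m : ℝ) * ((x 0) ^ 2 + (x 1) ^ 2) ^ (m - 1))
        * (2 * x 0 * v 0 + 2 * x 1 * v 1)
      + ((x 0) ^ 2 + (x 1) ^ 2) ^ m * ((n : ℝ) * ((x 2) ^ 2 + (x 3) ^ 2) ^ (n - 1))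
        * (2 * x 2 * v 2 + 2 * x 3 * v 3) := by
  simp [dZ, D1, D2, pr]
  ring

lemma dZ_self (m n : ℕ) (x : E4) : dZ m n x x = (2 * m + 2 * n) * Z m n x := by
  rw [dZ_apply]
  have h1 := pow_deriv_aux ((x 0) ^ 2 + (x 1) ^ 2) m
  have h2 := pow_deriv_aux ((x 2) ^ 2 + (x 3) ^ 2) n
  simp only [Z]
  linear_combination 2 * ((x 2) ^ 2 + (x 3) ^ 2) ^ n * h1 + 2 * ((x 0) ^ 2 + (x 1) ^ 2) ^ m * h2

lemma dZ_theta (m n : ℕ) (i : Fin 2) (x : E4) : dZ m n x (Theta0 i x) = 0 := by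
  fin_cases i <;> rw [dZ_apply] <;> simp [Theta0] <;> ring_nf <;> tauto

noncomputable def Th (i : Fin 2) : E4 →L[ℝ] E4 :=
  ContinuousLinearMap.pi (if i = 0 then ![-(pr 1), pr 0, 0, 0] else ![0, 0, -(pr 3), pr 2])

lemma Th_apply (i : Fin 2) (v : E4) : Th i v = Theta0 i v := by
  fin_cases i <;> funext j <;> fin_cases j <;>
    simp [Th, Theta0, pr, ContinuousLinearMap.pi_apply]

lemma theta_comm (i j : Fin 2) (x : E4) : Theta0 i (Theta0 j x) = Theta0 j (Theta0 i x) := by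
  fin_cases i <;> fin_cases j <;> funext k <;> fin_cases k <;> simp [Theta0]


lemma hasFDerivAt_Emn (m n : ℕ) (x : E4) :
    HasFDerivAt (Emn m n)
      (Z m n x • ContinuousLinearMap.id ℝ E4 + (dZ m n x).smulRight x) x :=
  (hasFDerivAt_Z m n x).smul (hasFDerivAt_id x)

lemma hasFDerivAt_Thmn (i : Fin 2) (m n : ℕ) (x : E4) :
    HasFDerivAt (Thmn i m n)
      (Z m n x • Th i + (dZ m n x).smulRight (Theta0 i x)) x := by
  have h := (hasFDerivAt_Z m n x).smul ((Th i).hasFDerivAt (x := x))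
  simp only [Th_apply] at h
  have e : Thmn i m n = Z m n • ⇑(Th i) := by funext y; simp [Thmn, Th_apply]
  rw [e]; exact h

lemma fderiv_Emn (m n : ℕ) (x : E4) :
    fderiv ℝ (Emn m n) x = Z m n x • ContinuousLinearMap.id ℝ E4 + (dZ m n x).smulRight x :=
  (hasFDerivAt_Emn m n x).fderiv

lemma fderiv_Thmn (i : Fin 2) (m n : ℕ) (x : E4) :
    fderiv ℝ (Thmn i m n) x = Z m n x • Th i + (dZ m n x).smulRight (Theta0 i x) :=
  (hasFDerivAt_Thmn i m n x).fderiv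

lemma Z_mul_s3 (a b c d : ℕ) (x : E4) : Z a b x * Z c d x = Z (a+c) (b+d) x := by
  simp [Z, pow_add]; ring

lemma brEE (a b c d : ℕ) :
    bracket (Emn a b) (Emn c d) = ((2*(a+b:ℝ)) - 2*(c+d:ℝ)) • Emn (a+c) (b+d) := by
  funext x j
  simp only [bracket, fderiv_Emn, Emn, E00, Pi.sub_apply, Pi.smul_apply, Pi.add_apply,
    ContinuousLinearMap.add_apply, ContinuousLinearMap.smul_apply,
    ContinuousLinearMap.id_apply, ContinuousLinearMap.smulRight_apply, map_smul,
    dZ_self, smul_eq_mul, ← Z_mul_s3 a b c d x]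
  ring

lemma brET (a b c d : ℕ) (i : Fin 2) :
    bracket (Emn a b) (Thmn i c d) = (-(2*(c+d:ℝ))) • Thmn i (a+c) (b+d) := by
  funext x j
  simp only [bracket, fderiv_Emn, fderiv_Thmn, Emn, Thmn, E00, Pi.sub_apply, Pi.smul_apply, Pi.add_apply,
    ContinuousLinearMap.add_apply, ContinuousLinearMap.smul_apply,
    ContinuousLinearMap.id_apply, ContinuousLinearMap.smulRight_apply, map_smul,
    Th_apply, dZ_self, dZ_theta, smul_eq_mul, ← Z_mul_s3 a b c d x]
  ring

lemma brTE (a b c d : ℕ) (i : Fin 2) :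
    bracket (Thmn i a b) (Emn c d) = (2*(a+b:ℝ)) • Thmn i (a+c) (b+d) := by
  funext x j
  simp only [bracket, fderiv_Emn, fderiv_Thmn, Emn, Thmn, E00, Pi.sub_apply, Pi.smul_apply, Pi.add_apply,
    ContinuousLinearMap.add_apply, ContinuousLinearMap.smul_apply,
    ContinuousLinearMap.id_apply, ContinuousLinearMap.smulRight_apply, map_smul,
    Th_apply, dZ_self, dZ_theta, smul_eq_mul, ← Z_mul_s3 a b c d x]
  ring

lemma brTT (a b c d : ℕ) (i j : Fin 2) :
    bracket (Thmn i a b) (Thmn j c d) = 0 := by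
  funext x k
  simp only [bracket, fderiv_Thmn, Thmn, Pi.sub_apply, Pi.smul_apply, Pi.add_apply, Pi.zero_apply,
    ContinuousLinearMap.add_apply, ContinuousLinearMap.smul_apply,
    ContinuousLinearMap.smulRight_apply, map_smul,
    Th_apply, dZ_theta, smul_eq_mul, theta_comm i j]
  ring


lemma diff_gens {V} (h : V ∈ lieGens) : Differentiable ℝ V := by
  rcases h with ⟨m, n, rfl⟩ | ⟨i, m, n, rfl⟩
  · exact fun x => (hasFDerivAt_Emn m n x).differentiableAt
  · exact fun x => (hasFDerivAt_Thmn i m n x).differentiableAt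

lemma diff_span {V} (h : V ∈ Submodule.span ℝ lieGens) : Differentiable ℝ V := by
  induction h using Submodule.span_induction with
  | mem x hx => exact diff_gens hx
  | zero => exact differentiable_const 0
  | add x y hx hy ihx ihy => exact ihx.add ihy
  | smul a x hx ih => exact ih.const_smul a

lemma bracket_gens {V W} (hV : V ∈ lieGens) (hW : W ∈ lieGens) :
    bracket V W ∈ Submodule.span ℝ lieGens := by
  rcases hV with ⟨a, b, rfl⟩ | ⟨i, a, b, rfl⟩ <;> rcases hW with ⟨c, d, rfl⟩ | ⟨j, c, d, rfl⟩
  · rw [brEE]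
    exact Submodule.smul_mem _ _ (Submodule.subset_span (Or.inl ⟨_, _, rfl⟩))
  · rw [brET]
    exact Submodule.smul_mem _ _ (Submodule.subset_span (Or.inr ⟨_, _, _, rfl⟩))
  · rw [brTE]
    exact Submodule.smul_mem _ _ (Submodule.subset_span (Or.inr ⟨_, _, _, rfl⟩))
  · rw [brTT]; exact Submodule.zero_mem _

lemma fderiv_zero_fun (x : Fin 4 → ℝ) :
    fderiv ℝ (0 : (Fin 4 → ℝ) → (Fin 4 → ℝ)) x = 0 := by
  rw [show (0 : (Fin 4 → ℝ) → (Fin 4 → ℝ)) = (fun _ => (0 : Fin 4 → ℝ)) from rfl]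
  exact fderiv_const_apply 0

lemma bracket_zero_left (W : (Fin 4 → ℝ) → (Fin 4 → ℝ)) : bracket 0 W = 0 := by
  funext x
  simp [bracket, fderiv_zero_fun]

lemma bracket_zero_right (V : (Fin 4 → ℝ) → (Fin 4 → ℝ)) : bracket V 0 = 0 := by
  funext x
  simp [bracket, fderiv_zero_fun]

lemma bracket_add_left {V₁ V₂ : (Fin 4 → ℝ) → (Fin 4 → ℝ)} (W : (Fin 4 → ℝ) → (Fin 4 → ℝ))
    (h₁ : Differentiable ℝ V₁) (h₂ : Differentiable ℝ V₂) :
    bracket (V₁ + V₂) W = bracket V₁ W + bracket V₂ W := by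
  funext x
  have : fderiv ℝ (V₁ + V₂) x = fderiv ℝ V₁ x + fderiv ℝ V₂ x := fderiv_add (h₁ x) (h₂ x)
  simp only [bracket, Pi.add_apply, this, ContinuousLinearMap.add_apply, map_add]
  abel

lemma bracket_add_right {W₁ W₂ : (Fin 4 → ℝ) → (Fin 4 → ℝ)} (V : (Fin 4 → ℝ) → (Fin 4 → ℝ))
    (h₁ : Differentiable ℝ W₁) (h₂ : Differentiable ℝ W₂) :
    bracket V (W₁ + W₂) = bracket V W₁ + bracket V W₂ := by
  funext x
  have : fderiv ℝ (W₁ + W₂) x = fderiv ℝ W₁ x + fderiv ℝ W₂ x := fderiv_add (h₁ x) (h₂ x)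
  simp only [bracket, Pi.add_apply, this, ContinuousLinearMap.add_apply, map_add]
  abel

lemma bracket_smul_left {V : (Fin 4 → ℝ) → (Fin 4 → ℝ)} (c : ℝ) (W : (Fin 4 → ℝ) → (Fin 4 → ℝ))
    (h : Differentiable ℝ V) : bracket (c • V) W = c • bracket V W := by
  funext x
  have : fderiv ℝ (c • V) x = c • fderiv ℝ V x := fderiv_const_smul (h x) c
  simp only [bracket, Pi.smul_apply, this, ContinuousLinearMap.smul_apply, map_smul]
  module

lemma bracket_smul_right {W : (Fin 4 → ℝ) → (Fin 4 → ℝ)} (c : ℝ) (V : (Fin 4 → ℝ) → (Fin 4 → ℝ))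
    (h : Differentiable ℝ W) : bracket V (c • W) = c • bracket V W := by
  funext x
  have : fderiv ℝ (c • W) x = c • fderiv ℝ W x := fderiv_const_smul (h x) c
  simp only [bracket, Pi.smul_apply, this, ContinuousLinearMap.smul_apply, map_smul]
  module


/-- the span 𝓛 of the E_{m,n} and Θ^i_{m,n} is closed under the Lie bracket. -/
theorem span_closed_under_bracket (V W : (Fin 4 → ℝ) → (Fin 4 → ℝ))
    (hV : V ∈ Submodule.span ℝ lieGens) (hW : W ∈ Submodule.span ℝ lieGens) :
    bracket V W ∈ Submodule.span ℝ lieGens := by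
  induction hV, hW using Submodule.span_induction₂ with
  | mem_mem x y hx hy => exact bracket_gens hx hy
  | zero_left y hy => rw [bracket_zero_left]; exact Submodule.zero_mem _
  | zero_right x hx => rw [bracket_zero_right]; exact Submodule.zero_mem _
  | add_left x y z hx hy hz ih₁ ih₂ =>
      rw [bracket_add_left z (diff_span hx) (diff_span hy)]
      exact Submodule.add_mem _ ih₁ ih₂
  | add_right x y z hx hy hz ih₁ ih₂ =>
      rw [bracket_add_right x (diff_span hy) (diff_span hz)]
      exact Submodule.add_mem _ ih₁ ih₂
  | smul_left r x y hx hy ih =>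
      rw [bracket_smul_left r y (diff_span hx)]
      exact Submodule.smul_mem _ _ ih
  | smul_right r x y hx hy ih =>
      rw [bracket_smul_right r x (diff_span hy)]
      exact Submodule.smul_mem _ _ ih
end
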